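/- Suppose the edges of the complete bipartite graph K_{n,n} are coloured with two colours (red and blue) in such a way that the red colour class (the graph on V(K_{n,n}) consisting of the red edges) is a vertex-disjoint union of stars. Then the vertex set of K_{n,n} can be covered by three pairwise vertex-disjoint blue paths. -/

import Mathlib

/-- Given a colouring `c` of the edges of the complete bipartite graph with parts `α`
and `β` (edge between `a : α` and `b : β` gets colour `c a b`), the colour class of
colour `i`, as a simple graph on `α ⊕ β`. -/
def bipColour {α β : Type*} {k : ℕ} (c : α → β → Fin k) (i : Fin k) :
    SimpleGraph (α ⊕ β) where
  Adj x y :=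
    match x, y with
    | Sum.inl a, Sum.inr b => c a b = i
    | Sum.inr b, Sum.inl a => c a b = i
    | _, _ => False
  symm := by
    constructor
    intro x y h
    cases x <;> cases y <;> first | exact h.elim | exact h
  loopless := by
    constructor
    intro x h
    cases x <;> exact h.elim

/-- A set of vertices `P` is the vertex set of a path of `G`; the empty set and a
single vertex count as paths. -/
def IsPathSet {V : Type*} (G : SimpleGraph V) (P : Set V) : Prop :=
  P = ∅ ∨ ∃ (u v : V) (p : G.Walk u v), p.IsPath ∧ P = {x | x ∈ p.support}

/-- A graph is a star: a tree with at most one vertex of degree greater than one. -/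
def IsStar {V : Type*} (G : SimpleGraph V) : Prop :=
  G.IsTree ∧ {v : V | 1 < {u : V | G.Adj v u}.ncard}.Subsingleton

/-! ### Auxiliary lemmas -/

lemma aux_exists_walk_of_chain' {V : Type*} (G : SimpleGraph V) (l : List V) (a : V)
    (h : List.Chain' G.Adj (a :: l)) : ∃ (v : V) (p : G.Walk a v), p.support = a :: l := by
  induction l generalizing a with
  | nil => exact ⟨a, SimpleGraph.Walk.nil, rfl⟩
  | cons b t ihl =>
    rw [List.Chain', List.isChain_cons_cons] at h
    obtain ⟨v, p, hp⟩ := ihl b h.2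
    exact ⟨v, SimpleGraph.Walk.cons h.1 p, by rw [SimpleGraph.Walk.support_cons, hp]⟩

lemma aux_isPathSet_of_list {V : Type*} (G : SimpleGraph V) (l : List V)
    (hc : List.Chain' G.Adj l) (hn : l.Nodup) : IsPathSet G {x | x ∈ l} := by
  cases l with
  | nil => exact Or.inl (by ext x; simp)
  | cons a t =>
    obtain ⟨v, p, hp⟩ := aux_exists_walk_of_chain' G t a hc
    exact Or.inr ⟨a, v, p, by rw [SimpleGraph.Walk.isPath_def, hp]; exact hn, by rw [hp]⟩

/-- Glue two fresh vertices on top of the first of three lists. -/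
lemma aux_glue {γ : Type*} (B : γ → γ → Prop) (x y : γ) (hxy : B x y) (hne : x ≠ y)
    (M N K : List γ) (hM : M.Chain' B) (hN : N.Chain' B) (hK : K.Chain' B)
    (hnd : (M ++ N ++ K).Nodup) (hx : x ∉ M ++ N ++ K) (hy : y ∉ M ++ N ++ K)
    (hcond : M = [] ∨ ∃ h t, M = h :: t ∧ B y h)
    (cov : ∀ z, z ≠ x → z ≠ y → z ∈ M ++ N ++ K) :
    ∃ l1 l2 l3 : List γ, l1.Chain' B ∧ l2.Chain' B ∧ l3.Chain' B ∧
      (l1 ++ l2 ++ l3).Nodup ∧ ∀ z, z ∈ l1 ++ l2 ++ l3 := by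
  have hsplit : (x :: y :: M) ++ N ++ K = x :: y :: (M ++ N ++ K) := by simp
  refine ⟨x :: y :: M, N, K, ?_, hN, hK, ?_, ?_⟩
  · rcases hcond with rfl | ⟨h, t, rfl, hyh⟩
    · exact List.isChain_pair.mpr hxy
    · exact List.isChain_cons_cons.mpr ⟨hxy, List.isChain_cons_cons.mpr ⟨hyh, hM⟩⟩
  · rw [hsplit, List.nodup_cons, List.nodup_cons]
    refine ⟨?_, hy, hnd⟩
    simp only [List.mem_cons]
    rintro (rfl | h)
    · exact hne rfl
    · exact hx h
  · intro z
    rw [hsplit, List.mem_cons, List.mem_cons]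
    by_cases h1 : z = x
    · exact Or.inl h1
    by_cases h2 : z = y
    · exact Or.inr (Or.inl h2)
    · exact Or.inr (Or.inr (cov z h1 h2))

/-- If no vertex of `α` has at most one red neighbour, we get an injection `α ⊕ α → β`. -/
lemma aux_exists_small {α β : Type} [Fintype α] [Fintype β] (r : α → β → Prop)
    (hpos : 0 < Fintype.card α) (hcard : Fintype.card β ≤ Fintype.card α)
    (H : ∀ a b, r a b → (∀ b', r a b' → b' = b) ∨ (∀ a', r a' b → a' = a)) :
    ∃ u : α, ∀ b b', r u b → r u b' → b = b' := by
  by_contra hc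
  push_neg at hc
  choose f g hf hg hfg using hc
  have keyf : ∀ a a', r a' (f a) → a' = a := by
    intro a a' h
    rcases H a (f a) (hf a) with h1 | h1
    · exact absurd ((h1 (g a) (hg a)).symm) (hfg a)
    · exact h1 a' h
  have keyg : ∀ a a', r a' (g a) → a' = a := by
    intro a a' h
    rcases H a (g a) (hg a) with h1 | h1
    · exact absurd (h1 (f a) (hf a)) (hfg a)
    · exact h1 a' h
  have hinj : Function.Injective (Sum.elim f g : α ⊕ α → β) := by
    rintro (a | a) (a' | a') h <;> simp only [Sum.elim_inl, Sum.elim_inr] at h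
    · have := keyf a a' (h ▸ hf a')
      rw [this]
    · obtain rfl := keyg a' a (h ▸ hf a)
      exact absurd h (hfg _)
    · obtain rfl := keyf a' a (h ▸ hg a)
      exact absurd h.symm (hfg _)
    · have := keyg a a' (h ▸ hg a')
      rw [this]
  have := Fintype.card_le_of_injective _ hinj
  rw [Fintype.card_sum] at this
  omega

/-- The main covering lemma, by induction on the size. -/
lemma aux_cover : ∀ (N : ℕ) (α β : Type) [Fintype α] [Fintype β]
    (r : α → β → Prop),
    Fintype.card α = N → Fintype.card β = N →
    (∀ a b, r a b → (∀ b', r a b' → b' = b) ∨ (∀ a', r a' b → a' = a)) →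
    ∀ (B : α ⊕ β → α ⊕ β → Prop),
    (∀ a b, ¬ r a b → B (Sum.inl a) (Sum.inr b)) →
    (∀ a b, ¬ r a b → B (Sum.inr b) (Sum.inl a)) →
    ∃ l1 l2 l3 : List (α ⊕ β), l1.Chain' B ∧ l2.Chain' B ∧ l3.Chain' B ∧
      (l1 ++ l2 ++ l3).Nodup ∧ ∀ x, x ∈ l1 ++ l2 ++ l3 := by
  intro N
  induction N with
  | zero =>
    intro α β _ _ r hα hβ H B hB1 hB2
    refine ⟨[], [], [], List.isChain_nil, List.isChain_nil, List.isChain_nil, by simp, ?_⟩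
    intro x
    haveI h1 := Fintype.card_eq_zero_iff.mp hα
    haveI h2 := Fintype.card_eq_zero_iff.mp hβ
    rcases x with a | b
    · exact h1.elim a
    · exact h2.elim b
  | succ N ih =>
    intro α β _ _ r hα hβ H B hB1 hB2
    classical
    by_cases hgood : ∃ u v, (∀ b b', r u b → r u b' → b = b') ∧
        (∀ a a', r a v → r a' v → a = a') ∧ ¬ r u v
    · obtain ⟨u, v, hU, hV, huv⟩ := hgood
      -- recurse on the complement of u, v
      set emb : {a : α // a ≠ u} ⊕ {b : β // b ≠ v} → α ⊕ β :=
        Sum.map Subtype.val Subtype.val with hemb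
      have hembinj : Function.Injective emb :=
        Function.Injective.sumMap Subtype.val_injective Subtype.val_injective
      have hα' : Fintype.card {a : α // a ≠ u} = N := by
        have e : {a : α // ¬ a = u} ≃ {a : α // a ≠ u} :=
          Equiv.subtypeEquivRight (fun a => Iff.rfl)
        have h1 := Fintype.card_subtype_compl (fun a : α => a = u)
        rw [Fintype.card_subtype_eq] at h1
        rw [← Fintype.card_congr e, h1, hα]
        omega
      have hβ' : Fintype.card {b : β // b ≠ v} = N := by
        have e : {b : β // ¬ b = v} ≃ {b : β // b ≠ v} :=
          Equiv.subtypeEquivRight (fun b => Iff.rfl)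
        have h1 := Fintype.card_subtype_compl (fun b : β => b = v)
        rw [Fintype.card_subtype_eq] at h1
        rw [← Fintype.card_congr e, h1, hβ]
        omega
      obtain ⟨l1, l2, l3, c1, c2, c3, nd, cov⟩ :=
        ih {a : α // a ≠ u} {b : β // b ≠ v} (fun a b => r a.1 b.1) hα' hβ'
          (fun a b h => by
            rcases H a.1 b.1 h with h1 | h1
            · exact Or.inl fun b' hb' => Subtype.ext (h1 b'.1 hb')
            · exact Or.inr fun a' ha' => Subtype.ext (h1 a'.1 ha'))
          (fun x y => B (emb x) (emb y))
          (fun a b h => hB1 a.1 b.1 h) (fun a b h => hB2 a.1 b.1 h)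
      set L1 := l1.map emb with hL1def
      set L2 := l2.map emb with hL2def
      set L3 := l3.map emb with hL3def
      have hcat : L1 ++ L2 ++ L3 = (l1 ++ l2 ++ l3).map emb := by
        simp [hL1def, hL2def, hL3def]
      have C1 : L1.Chain' B := (List.isChain_map emb).mpr c1
      have C2 : L2.Chain' B := (List.isChain_map emb).mpr c2
      have C3 : L3.Chain' B := (List.isChain_map emb).mpr c3
      have nd' : (L1 ++ L2 ++ L3).Nodup := by
        rw [hcat]; exact nd.map hembinj
      have hfreshu : Sum.inl u ∉ L1 ++ L2 ++ L3 := by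
        rw [hcat, List.mem_map]
        rintro ⟨y, -, hy⟩
        rcases y with a | b
        · exact a.2 (Sum.inl.inj hy)
        · exact Sum.inr_ne_inl hy
      have hfreshv : Sum.inr v ∉ L1 ++ L2 ++ L3 := by
        rw [hcat, List.mem_map]
        rintro ⟨y, -, hy⟩
        rcases y with a | b
        · exact Sum.inl_ne_inr hy
        · exact b.2 (Sum.inr.inj hy)
      have covL : ∀ x, x ≠ Sum.inl u → x ≠ Sum.inr v → x ∈ L1 ++ L2 ++ L3 := by
        intro x h1 h2
        rw [hcat, List.mem_map]
        rcases x with a | b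
        · exact ⟨Sum.inl ⟨a, fun h => h1 (by rw [h])⟩, cov _, rfl⟩
        · exact ⟨Sum.inr ⟨b, fun h => h2 (by rw [h])⟩, cov _, rfl⟩
      -- a general glue for a list with a good head
      have goodGlue : ∀ (M N' K : List (α ⊕ β)), M.Chain' B → N'.Chain' B → K.Chain' B →
          (M ++ N' ++ K).Nodup → Sum.inl u ∉ M ++ N' ++ K → Sum.inr v ∉ M ++ N' ++ K →
          (∀ z, z ≠ Sum.inl u → z ≠ Sum.inr v → z ∈ M ++ N' ++ K) →
          ∀ h t, M = h :: t →
          ¬((∃ a, h = Sum.inl a ∧ r a v) ∨ (∃ b, h = Sum.inr b ∧ r u b)) →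
          ∃ l1 l2 l3 : List (α ⊕ β), l1.Chain' B ∧ l2.Chain' B ∧ l3.Chain' B ∧
            (l1 ++ l2 ++ l3).Nodup ∧ ∀ x, x ∈ l1 ++ l2 ++ l3 := by
        intro M N' K cM cN cK nd0 hxu hxv cov0 h t hMeq hbad
        rcases h with a | b
        · have hra : ¬ r a v := fun hr => hbad (Or.inl ⟨a, rfl, hr⟩)
          exact aux_glue B (Sum.inl u) (Sum.inr v) (hB1 u v huv) (by simp) M N' K cM cN cK
            nd0 hxu hxv (Or.inr ⟨Sum.inl a, t, hMeq, hB2 a v hra⟩) cov0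
        · have hrb : ¬ r u b := fun hr => hbad (Or.inr ⟨b, rfl, hr⟩)
          exact aux_glue B (Sum.inr v) (Sum.inl u) (hB2 u v huv) (by simp) M N' K cM cN cK
            nd0 hxv hxu (Or.inr ⟨Sum.inr b, t, hMeq, hB1 u b hrb⟩)
            (fun z hz1 hz2 => cov0 z hz2 hz1)
      -- permutation packages
      have p2 : (L2 ++ L1 ++ L3).Perm (L1 ++ L2 ++ L3) :=
        (List.perm_append_comm).append_right L3
      have p3 : (L3 ++ L1 ++ L2).Perm (L1 ++ L2 ++ L3) := by
        rw [List.append_assoc]; exact List.perm_append_comm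
      by_cases e1 : L1 = []
      · exact aux_glue B (Sum.inl u) (Sum.inr v) (hB1 u v huv) (by simp) L1 L2 L3 C1 C2 C3
          nd' hfreshu hfreshv (Or.inl e1) covL
      by_cases e2 : L2 = []
      · exact aux_glue B (Sum.inl u) (Sum.inr v) (hB1 u v huv) (by simp) L2 L1 L3 C2 C1 C3
          (p2.nodup_iff.mpr nd') (fun h => hfreshu (p2.subset h)) (fun h => hfreshv (p2.subset h))
          (Or.inl e2) (fun z h1 h2 => p2.mem_iff.mpr (covL z h1 h2))
      by_cases e3 : L3 = []
      · exact aux_glue B (Sum.inl u) (Sum.inr v) (hB1 u v huv) (by simp) L3 L1 L2 C3 C1 C2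
          (p3.nodup_iff.mpr nd') (fun h => hfreshu (p3.subset h)) (fun h => hfreshv (p3.subset h))
          (Or.inl e3) (fun z h1 h2 => p3.mem_iff.mpr (covL z h1 h2))
      obtain ⟨h1, t1, hL1⟩ := List.exists_cons_of_ne_nil e1
      obtain ⟨h2, t2, hL2⟩ := List.exists_cons_of_ne_nil e2
      obtain ⟨h3, t3, hL3⟩ := List.exists_cons_of_ne_nil e3
      by_cases B1 : (∃ a, h1 = Sum.inl a ∧ r a v) ∨ (∃ b, h1 = Sum.inr b ∧ r u b)
      · by_cases B2 : (∃ a, h2 = Sum.inl a ∧ r a v) ∨ (∃ b, h2 = Sum.inr b ∧ r u b)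
        · by_cases B3 : (∃ a, h3 = Sum.inl a ∧ r a v) ∨ (∃ b, h3 = Sum.inr b ∧ r u b)
          · exfalso
            -- three distinct heads among at most two possible bad values
            have m1 : h1 ∈ L1 := by rw [hL1]; exact List.mem_cons_self
            have m2 : h2 ∈ L2 := by rw [hL2]; exact List.mem_cons_self
            have m3 : h3 ∈ L3 := by rw [hL3]; exact List.mem_cons_self
            obtain ⟨nd12, nd3, dj⟩ := List.nodup_append'.mp nd'
            obtain ⟨ndl1, ndl2, dj12⟩ := List.nodup_append'.mp nd12
            have hd12 : h1 ≠ h2 := fun e => dj12 m1 (by rw [e]; exact m2)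
            have hd13 : h1 ≠ h3 := fun e => dj (List.mem_append_left _ m1) (by rw [e]; exact m3)
            have hd23 : h2 ≠ h3 := fun e => dj (List.mem_append_right _ m2) (by rw [e]; exact m3)
            rcases B1 with ⟨a1, rfl, r1⟩ | ⟨b1, rfl, r1⟩ <;>
              rcases B2 with ⟨a2, rfl, r2⟩ | ⟨b2, rfl, r2⟩ <;>
              rcases B3 with ⟨a3, rfl, r3⟩ | ⟨b3, rfl, r3⟩
            · exact hd12 (congrArg Sum.inl (hV a1 a2 r1 r2))
            · exact hd12 (congrArg Sum.inl (hV a1 a2 r1 r2))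
            · exact hd13 (congrArg Sum.inl (hV a1 a3 r1 r3))
            · exact hd23 (congrArg Sum.inr (hU b2 b3 r2 r3))
            · exact hd23 (congrArg Sum.inl (hV a2 a3 r2 r3))
            · exact hd13 (congrArg Sum.inr (hU b1 b3 r1 r3))
            · exact hd12 (congrArg Sum.inr (hU b1 b2 r1 r2))
            · exact hd12 (congrArg Sum.inr (hU b1 b2 r1 r2))
          · exact goodGlue L3 L1 L2 C3 C1 C2 (p3.nodup_iff.mpr nd')
              (fun h => hfreshu (p3.subset h)) (fun h => hfreshv (p3.subset h))
              (fun z hz1 hz2 => p3.mem_iff.mpr (covL z hz1 hz2)) h3 t3 hL3 B3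
        · exact goodGlue L2 L1 L3 C2 C1 C3 (p2.nodup_iff.mpr nd')
            (fun h => hfreshu (p2.subset h)) (fun h => hfreshv (p2.subset h))
            (fun z hz1 hz2 => p2.mem_iff.mpr (covL z hz1 hz2)) h2 t2 hL2 B2
      · exact goodGlue L1 L2 L3 C1 C2 C3 nd' hfreshu hfreshv covL h1 t1 hL1 B1
    · -- no good pair: the graph is a single red edge on a single pair
      push_neg at hgood
      have posα : 0 < Fintype.card α := by omega
      have posβ : 0 < Fintype.card β := by omega
      obtain ⟨u, hU⟩ := aux_exists_small r posα (by omega) H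
      obtain ⟨v, hV0⟩ := aux_exists_small (fun b a => r a b) posβ (by omega)
        (fun b a h => (H a b h).symm)
      have hall : ∀ a : α, a = u := by
        intro a
        by_contra ha
        have hUAa : ∀ b b', r a b → r a b' → b = b' := by
          by_contra h'
          push_neg at h'
          obtain ⟨b, b', hab, hab', hbb'⟩ := h'
          have hb : ∀ x, r x b → x = a := by
            rcases H a b hab with hh | hh
            · exact absurd (hh b' hab').symm hbb'
            · exact hh
          have hUBb : ∀ x x', r x b → r x' b → x = x' :=
            fun x x' q1 q2 => (hb x q1).trans (hb x' q2).symm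
          have hub : r u b := hgood u b hU hUBb
          exact ha (hb u hub).symm
        have hav : r a v := hgood a v hUAa hV0
        have huv : r u v := hgood u v hU hV0
        exact ha (hV0 a u hav huv)
      have hcα : Fintype.card α = 1 := Fintype.card_eq_one_iff.mpr ⟨u, hall⟩
      have hN : N = 0 := by omega
      have hcβ : Fintype.card β = 1 := by omega
      obtain ⟨v1, hv1⟩ := Fintype.card_eq_one_iff.mp hcβ
      refine ⟨[Sum.inl u], [Sum.inr v1], [], List.isChain_singleton _, List.isChain_singleton _, List.isChain_nil, by simp, ?_⟩
      intro x
      rcases x with a | b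
      · simp [hall a]
      · simp [hv1 b]

/-- The local condition extracted from the star hypothesis. -/
lemma aux_red_local {n : ℕ} (c : Fin n → Fin n → Fin 2)
    (hstar : ∀ comp : (bipColour c 0).ConnectedComponent,
      IsStar ((bipColour c 0).induce comp.supp)) :
    ∀ a b, c a b = 0 → (∀ b', c a b' = 0 → b' = b) ∨ (∀ a', c a' b = 0 → a' = a) := by
  intro a b hab
  by_contra hcon
  push_neg at hcon
  obtain ⟨⟨b', hab', hbb'⟩, ⟨a', ha'b, haa'⟩⟩ := hcon
  set G := bipColour c 0 with hG
  have adj_ab : G.Adj (Sum.inl a) (Sum.inr b) := hab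
  have adj_ab' : G.Adj (Sum.inl a) (Sum.inr b') := hab'
  have adj_a'b : G.Adj (Sum.inl a') (Sum.inr b) := ha'b
  set K := G.connectedComponentMk (Sum.inl a) with hK
  have mema : Sum.inl a ∈ K.supp := (K.mem_supp_iff _).mpr rfl
  have memb : Sum.inr b ∈ K.supp :=
    (K.mem_supp_iff _).mpr (SimpleGraph.ConnectedComponent.sound adj_ab.symm.reachable)
  have memb' : Sum.inr b' ∈ K.supp :=
    (K.mem_supp_iff _).mpr (SimpleGraph.ConnectedComponent.sound adj_ab'.symm.reachable)
  have mema' : Sum.inl a' ∈ K.supp :=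
    (K.mem_supp_iff _).mpr
      (SimpleGraph.ConnectedComponent.sound (adj_a'b.reachable.trans adj_ab.symm.reachable))
  have key := (hstar K).2
  have hmem1 : (⟨Sum.inl a, mema⟩ : K.supp) ∈
      {v : K.supp | 1 < {u : K.supp | (G.induce K.supp).Adj v u}.ncard} := by
    simp only [Set.mem_setOf_eq]
    rw [Set.one_lt_ncard_iff (Set.toFinite _)]
    refine ⟨⟨Sum.inr b, memb⟩, ⟨Sum.inr b', memb'⟩, ?_, ?_, ?_⟩
    · exact adj_ab
    · exact adj_ab'
    · simp only [ne_eq, Subtype.mk.injEq, Sum.inr.injEq]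
      exact fun h => hbb' h.symm
  have hmem2 : (⟨Sum.inr b, memb⟩ : K.supp) ∈
      {v : K.supp | 1 < {u : K.supp | (G.induce K.supp).Adj v u}.ncard} := by
    simp only [Set.mem_setOf_eq]
    rw [Set.one_lt_ncard_iff (Set.toFinite _)]
    refine ⟨⟨Sum.inl a, mema⟩, ⟨Sum.inl a', mema'⟩, ?_, ?_, ?_⟩
    · exact adj_ab.symm
    · exact adj_a'b.symm
    · simp only [ne_eq, Subtype.mk.injEq, Sum.inl.injEq]
      exact fun h => haa' h.symm
  have := key hmem1 hmem2
  simp [Subtype.ext_iff] at this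

theorem statement17 {n : ℕ} (c : Fin n → Fin n → Fin 2)
    (hstar : ∀ comp : (bipColour c 0).ConnectedComponent,
      IsStar ((bipColour c 0).induce comp.supp)) :
    ∃ P₁ P₂ P₃ : Set (Fin n ⊕ Fin n),
      IsPathSet (bipColour c 1) P₁ ∧
      IsPathSet (bipColour c 1) P₂ ∧
      IsPathSet (bipColour c 1) P₃ ∧
      Disjoint P₁ P₂ ∧ Disjoint P₁ P₃ ∧ Disjoint P₂ P₃ ∧
      P₁ ∪ P₂ ∪ P₃ = Set.univ := by
  classical
  have H := aux_red_local c hstar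
  have hfin2 : ∀ x : Fin 2, x ≠ 0 → x = 1 := by decide
  obtain ⟨l1, l2, l3, c1, c2, c3, nd, cov⟩ :=
    aux_cover n (Fin n) (Fin n) (fun a b => c a b = 0) (Fintype.card_fin n) (Fintype.card_fin n)
      H (bipColour c 1).Adj
      (fun a b h => show c a b = 1 from hfin2 _ h)
      (fun a b h => show c a b = 1 from hfin2 _ h)
  obtain ⟨nd12, nd3, dj⟩ := List.nodup_append'.mp nd
  obtain ⟨nd1, nd2, dj12⟩ := List.nodup_append'.mp nd12
  refine ⟨{x | x ∈ l1}, {x | x ∈ l2}, {x | x ∈ l3},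
    aux_isPathSet_of_list _ _ c1 nd1, aux_isPathSet_of_list _ _ c2 nd2,
    aux_isPathSet_of_list _ _ c3 nd3, ?_, ?_, ?_, ?_⟩
  · exact Set.disjoint_left.mpr (fun x hx1 hx2 => dj12 hx1 hx2)
  · exact Set.disjoint_left.mpr (fun x hx1 hx2 => dj (List.mem_append_left _ hx1) hx2)
  · exact Set.disjoint_left.mpr (fun x hx1 hx2 => dj (List.mem_append_right _ hx1) hx2)
  · ext x
    simp only [Set.mem_union, Set.mem_setOf_eq, Set.mem_univ, iff_true]
    have := cov x
    simp only [List.mem_append] at this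
    tauto
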